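/- For every nonnegative integer r, every n ∈ {2, …, N} and every f ∈ ℂ^N, λ_n^{−r/2} ‖L^{r/2} P_n f‖₂ ≤ (π/2)^r · ω_r(f, λ_n^{−1/2}). -/

import Mathlib

open Matrix

noncomputable section

/-- Euclidean (2-)norm on `ℂ^N`. -/
def cnorm2 {N : ℕ} (f : Fin N → ℂ) : ℝ := Real.sqrt (∑ i, ‖f i‖ ^ 2)

/-- The spectral operator `Σ_j c_j u_j u_j^*`. -/
def specOp {N : ℕ} (u : Fin N → Fin N → ℂ) (c : Fin N → ℂ) : Matrix (Fin N) (Fin N) ℂ :=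
  ∑ j, c j • Matrix.vecMulVec (u j) (star (u j))

/-- The graph translation operator `T_s = Σ_j e^{i s √λ_j} u_j u_j^*`. -/
def Tmat {N : ℕ} (u : Fin N → Fin N → ℂ) (lam : Fin N → ℝ) (s : ℝ) :
    Matrix (Fin N) (Fin N) ℂ :=
  specOp u (fun j => Complex.exp (Complex.I * (s : ℂ) * (Real.sqrt (lam j) : ℂ)))

/-- The `r`-th modulus of smoothness `ω_r(f,t) = sup_{|s| ≤ t} ‖(T_s - I)^r f‖₂`. -/
def omegaMod {N : ℕ} (u : Fin N → Fin N → ℂ) (lam : Fin N → ℝ) (r : ℕ) (f : Fin N → ℂ)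
    (t : ℝ) : ℝ :=
  ⨆ s : {s : ℝ // |s| ≤ t}, cnorm2 (((Tmat u lam s.1 - 1) ^ r).mulVec f)

/-- Functional calculus power `L^x = Σ_j λ_j^x u_j u_j^*` (with `0^0 = 1`). -/
def Lpow {N : ℕ} (u : Fin N → Fin N → ℂ) (lam : Fin N → ℝ) (x : ℝ) :
    Matrix (Fin N) (Fin N) ℂ :=
  specOp u (fun j => ((lam j ^ x : ℝ) : ℂ))

/-- Orthogonal projection `P_n = Σ_{j=1}^n u_j u_j^*` onto `span(u_1, …, u_n)`
(`u_k` corresponds to the index `k-1 : Fin N`). -/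
def Pproj {N : ℕ} (u : Fin N → Fin N → ℂ) (n : ℕ) : Matrix (Fin N) (Fin N) ℂ :=
  specOp u (fun j => if (j : ℕ) < n then 1 else 0)

lemma sum_mulVec_aux {N : ℕ} (M : Fin N → Matrix (Fin N) (Fin N) ℂ) (v : Fin N → ℂ) :
    (∑ i, M i).mulVec v = ∑ i, (M i).mulVec v := by
  ext i
  simp only [Matrix.mulVec, dotProduct, Matrix.sum_apply, Finset.sum_apply,
    Finset.sum_mul]
  rw [Finset.sum_comm]

lemma vecMulVec_mulVec_aux {N : ℕ} (a b v : Fin N → ℂ) :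
    (Matrix.vecMulVec a b).mulVec v = (b ⬝ᵥ v) • a := by
  ext i
  simp [Matrix.mulVec, dotProduct, Matrix.vecMulVec_apply, Finset.mul_sum,
    mul_comm, mul_assoc, mul_left_comm]

lemma specOp_mulVec {N : ℕ} (u : Fin N → Fin N → ℂ) (a : Fin N → ℂ) (f : Fin N → ℂ) :
    (specOp u a).mulVec f = ∑ j, (a j * (star (u j) ⬝ᵥ f)) • u j := by
  unfold specOp
  rw [sum_mulVec_aux]
  refine Finset.sum_congr rfl fun j _ => ?_
  rw [Matrix.smul_mulVec, vecMulVec_mulVec_aux, smul_smul]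

lemma coeff_aux {N : ℕ} (u : Fin N → Fin N → ℂ)
    (hu : ∀ i j, star (u i) ⬝ᵥ u j = if i = j then 1 else 0)
    (x : Fin N → ℂ) (j : Fin N) :
    star (u j) ⬝ᵥ (∑ k, x k • u k) = x j := by
  have expand : star (u j) ⬝ᵥ (∑ k, x k • u k) = ∑ k, x k * (star (u j) ⬝ᵥ u k) := by
    simp only [dotProduct, Finset.sum_apply, Pi.smul_apply, smul_eq_mul, Finset.mul_sum]
    rw [Finset.sum_comm]
    exact Finset.sum_congr rfl fun k _ => Finset.sum_congr rfl fun i _ => by ring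
  rw [expand]
  simp [hu]

lemma specOp_one {N : ℕ} (u : Fin N → Fin N → ℂ)
    (hu : ∀ i j, star (u i) ⬝ᵥ u j = if i = j then 1 else 0) :
    specOp u (fun _ => 1) = 1 := by
  have h1 : (Matrix.of u) * (Matrix.of u)ᴴ = 1 := by
    ext i k
    have h := hu k i
    simp only [dotProduct, Pi.star_apply, RCLike.star_def] at h
    simp only [Matrix.mul_apply, Matrix.conjTranspose_apply, Matrix.of_apply, Matrix.one_apply]
    rw [show (if i = k then (1:ℂ) else 0) = if k = i then 1 else 0 by simp [eq_comm], ← h]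
    exact Finset.sum_congr rfl fun x _ => by rw [Complex.star_def, mul_comm]
  have h2 : (Matrix.of u)ᴴ * (Matrix.of u) = 1 := mul_eq_one_comm.mp h1
  ext i k
  have h3 := congrFun (congrFun h2 k) i
  simp only [Matrix.mul_apply, Matrix.conjTranspose_apply, Matrix.of_apply] at h3
  simp only [Matrix.one_apply] at h3
  simp only [specOp, one_smul, Matrix.sum_apply, Matrix.smul_apply, Matrix.vecMulVec_apply,
    Pi.star_apply, smul_eq_mul, one_mul, Matrix.one_apply]
  rw [show (if i = k then (1:ℂ) else 0) = if k = i then 1 else 0 by simp [eq_comm], ← h3]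
  exact Finset.sum_congr rfl fun x _ => mul_comm _ _

lemma expand_f {N : ℕ} (u : Fin N → Fin N → ℂ)
    (hu : ∀ i j, star (u i) ⬝ᵥ u j = if i = j then 1 else 0) (f : Fin N → ℂ) :
    f = ∑ j, (star (u j) ⬝ᵥ f) • u j := by
  have h := specOp_mulVec u (fun _ => 1) f
  rw [specOp_one u hu, Matrix.one_mulVec] at h
  simpa using h

lemma specOp_pow_mulVec {N : ℕ} (u : Fin N → Fin N → ℂ)
    (hu : ∀ i j, star (u i) ⬝ᵥ u j = if i = j then 1 else 0)
    (e : Fin N → ℂ) (f : Fin N → ℂ) (r : ℕ) :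
    ((specOp u e) ^ r).mulVec f = ∑ j, (e j ^ r * (star (u j) ⬝ᵥ f)) • u j := by
  induction r with
  | zero => simpa [Matrix.one_mulVec] using expand_f u hu f
  | succ r ih =>
    rw [pow_succ', ← Matrix.mulVec_mulVec, ih, specOp_mulVec]
    refine Finset.sum_congr rfl fun j _ => ?_
    rw [coeff_aux u hu]
    rw [show (e j * (e j ^ r * (star (u j) ⬝ᵥ f))) = e j ^ (r+1) * (star (u j) ⬝ᵥ f) by ring]

lemma sum_dotProduct_aux {N : ℕ} (w : Fin N → Fin N → ℂ) (g : Fin N → ℂ) :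
    (∑ k, w k) ⬝ᵥ g = ∑ k, w k ⬝ᵥ g := by
  simp only [dotProduct, Finset.sum_apply, Finset.sum_mul]
  rw [Finset.sum_comm]

lemma parseval {N : ℕ} (u : Fin N → Fin N → ℂ)
    (hu : ∀ i j, star (u i) ⬝ᵥ u j = if i = j then 1 else 0) (x : Fin N → ℂ) :
    cnorm2 (∑ j, x j • u j) = Real.sqrt (∑ j, ‖x j‖ ^ 2) := by
  unfold cnorm2
  congr 1
  set g : Fin N → ℂ := ∑ j, x j • u j with hg
  have hsq : ∀ z : ℂ, ((‖z‖ ^ 2 : ℝ) : ℂ) = star z * z := by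
    intro z
    rw [Complex.star_def, mul_comm, Complex.mul_conj, Complex.normSq_eq_norm_sq]
  have h1 : ((∑ i, ‖g i‖ ^ 2 : ℝ) : ℂ) = star g ⬝ᵥ g := by
    rw [Complex.ofReal_sum]
    simp only [dotProduct, Pi.star_apply]
    exact Finset.sum_congr rfl fun i _ => hsq (g i)
  have h2 : star g ⬝ᵥ g = ((∑ j, ‖x j‖ ^ 2 : ℝ) : ℂ) := by
    have hstar : star g = ∑ k, star (x k) • star (u k) := by
      rw [hg]
      ext i
      simp [Finset.sum_apply]
    rw [hstar, sum_dotProduct_aux]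
    have : ∀ k, (star (x k) • star (u k)) ⬝ᵥ g = star (x k) * x k := by
      intro k
      rw [smul_dotProduct, hg, coeff_aux u hu, smul_eq_mul]
    rw [Finset.sum_congr rfl fun k _ => this k, Complex.ofReal_sum]
    exact Finset.sum_congr rfl fun k _ => (hsq (x k)).symm
  exact_mod_cast h1.trans h2

lemma norm_exp_theta_sub_one_sq (θ : ℝ) :
    ‖Complex.exp ((θ : ℂ) * Complex.I) - 1‖ ^ 2 = 2 - 2 * Real.cos θ := by
  rw [Complex.exp_mul_I]
  have h : Complex.cos θ + Complex.sin θ * Complex.I - 1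
      = ((Real.cos θ - 1 : ℝ) : ℂ) + ((Real.sin θ : ℝ) : ℂ) * Complex.I := by
    rw [← Complex.ofReal_cos, ← Complex.ofReal_sin]
    push_cast
    ring
  rw [h, Complex.sq_norm, Complex.normSq_add_mul_I]
  nlinarith [Real.sin_sq_add_cos_sq θ]

lemma core_ineq (lamj lamn : ℝ) (h0 : 0 ≤ lamj) (hn : 0 < lamn) (hle : lamj ≤ lamn) (r : ℕ) :
    lamn ^ (-(r : ℝ)) * lamj ^ ((r : ℝ)) ≤
      (Real.pi / 2) ^ (2 * r) *
        ‖Complex.exp (Complex.I * ((lamn ^ (-(1:ℝ)/2) : ℝ) : ℂ) * ((Real.sqrt lamj : ℝ) : ℂ))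
          - 1‖ ^ (2 * r) := by
  set t : ℝ := lamn ^ (-(1:ℝ)/2) with htdef
  have ht : 0 < t := Real.rpow_pos_of_pos hn _
  set θ : ℝ := t * Real.sqrt lamj with hθdef
  have hθ0 : 0 ≤ θ := mul_nonneg ht.le (Real.sqrt_nonneg _)
  have ht2 : t ^ 2 = lamn⁻¹ := by
    rw [htdef, ← Real.rpow_natCast (lamn ^ (-(1:ℝ)/2)) 2, ← Real.rpow_mul hn.le]
    norm_num
    exact Real.rpow_neg_one lamn
  have hθ2 : θ ^ 2 = lamn⁻¹ * lamj := by
    rw [hθdef, mul_pow, ht2, Real.sq_sqrt h0]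
  have hθ1 : θ ≤ 1 := by
    nlinarith [hθ2, mul_le_mul_of_nonneg_left hle (inv_nonneg.mpr hn.le),
      inv_mul_cancel₀ hn.ne']
  have harg : Complex.I * ((t : ℝ) : ℂ) * ((Real.sqrt lamj : ℝ) : ℂ) = (θ : ℂ) * Complex.I := by
    rw [hθdef, Complex.ofReal_mul]
    ring
  rw [harg]
  have hnsq : ‖Complex.exp ((θ : ℂ) * Complex.I) - 1‖ ^ 2 = 4 * Real.sin (θ / 2) ^ 2 := by
    rw [norm_exp_theta_sub_one_sq]
    have hcos : Real.cos θ = 1 - 2 * Real.sin (θ / 2) ^ 2 := by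
      have h1 := Real.cos_two_mul' (θ / 2)
      have h2 := Real.sin_sq_add_cos_sq (θ / 2)
      have h3 : 2 * (θ / 2) = θ := by ring
      rw [h3] at h1
      nlinarith
    rw [hcos]; ring
  have hJ : 2 / Real.pi * (θ / 2) ≤ Real.sin (θ / 2) :=
    Real.mul_le_sin (by positivity) (by nlinarith [Real.pi_gt_three])
  have base : lamn⁻¹ * lamj ≤ (Real.pi / 2) ^ 2 * ‖Complex.exp ((θ : ℂ) * Complex.I) - 1‖ ^ 2 := by
    rw [hnsq, ← hθ2]
    have hpi := Real.pi_pos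
    have h4 : θ / Real.pi ≤ Real.sin (θ / 2) := by
      calc θ / Real.pi = 2 / Real.pi * (θ / 2) := by field_simp
        _ ≤ _ := hJ
    have h5 : 0 ≤ θ / Real.pi := by positivity
    have h6 : (θ / Real.pi) ^ 2 ≤ Real.sin (θ / 2) ^ 2 := by nlinarith
    calc θ ^ 2 = Real.pi ^ 2 * (θ / Real.pi) ^ 2 := by field_simp
      _ ≤ Real.pi ^ 2 * Real.sin (θ / 2) ^ 2 := by nlinarith
      _ = (Real.pi / 2) ^ 2 * (4 * Real.sin (θ / 2) ^ 2) := by ring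
  have hfinal := pow_le_pow_left₀ (by positivity) base r
  calc lamn ^ (-(r : ℝ)) * lamj ^ ((r : ℝ)) = (lamn⁻¹ * lamj) ^ r := by
        rw [Real.rpow_neg hn.le, Real.rpow_natCast, Real.rpow_natCast, mul_pow, inv_pow]
    _ ≤ ((Real.pi / 2) ^ 2 * ‖Complex.exp ((θ : ℂ) * Complex.I) - 1‖ ^ 2) ^ r := hfinal
    _ = (Real.pi / 2) ^ (2 * r) * ‖Complex.exp ((θ : ℂ) * Complex.I) - 1‖ ^ (2 * r) := by
        rw [mul_pow, ← pow_mul, ← pow_mul]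



/-- For every nonnegative integer `r`, every `n ∈ {2, …, N}` and every
`f ∈ ℂ^N`, `λ_n^{-r/2} ‖L^{r/2} P_n f‖₂ ≤ (π/2)^r · ω_r(f, λ_n^{-1/2})`. -/
theorem stmt2
    (N : ℕ) (hN : 2 ≤ N)
    (u : Fin N → Fin N → ℂ)
    (hu : ∀ i j, star (u i) ⬝ᵥ u j = if i = j then 1 else 0)
    (lam : Fin N → ℝ) (hmono : Monotone lam)
    (hlam0 : lam ⟨0, by omega⟩ = 0) (hlam1 : 0 < lam ⟨1, by omega⟩)
    (r : ℕ) (n : ℕ) (hn2 : 2 ≤ n) (hnN : n ≤ N) (f : Fin N → ℂ) :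
    lam ⟨n - 1, by omega⟩ ^ (-(r : ℝ) / 2) *
        cnorm2 ((Lpow u lam ((r : ℝ) / 2)).mulVec ((Pproj u n).mulVec f)) ≤
      (Real.pi / 2) ^ r * omegaMod u lam r f (lam ⟨n - 1, by omega⟩ ^ (-(1 : ℝ) / 2)) := by
  have hj0 : ∀ j : Fin N, 0 ≤ lam j := fun j => by
    rw [← hlam0]
    exact hmono (by simp [Fin.le_def])
  have hlamNpos : 0 < lam ⟨n - 1, by omega⟩ :=
    lt_of_lt_of_le hlam1 (hmono (by simp [Fin.le_def]; omega))
  set lamN : ℝ := lam ⟨n - 1, by omega⟩ with hlamNdef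
  set t : ℝ := lamN ^ (-(1 : ℝ) / 2) with htdef
  have ht : 0 < t := Real.rpow_pos_of_pos hlamNpos _
  set c : Fin N → ℂ := fun j => star (u j) ⬝ᵥ f with hc
  -- LHS expansion
  have hL : (Lpow u lam ((r : ℝ) / 2)).mulVec ((Pproj u n).mulVec f)
      = ∑ j, (((lam j ^ ((r : ℝ) / 2) : ℝ) : ℂ)
          * ((if (j : ℕ) < n then 1 else 0) * c j)) • u j := by
    rw [show (Pproj u n).mulVec f
        = ∑ k, ((fun k : Fin N => (if (k : ℕ) < n then (1 : ℂ) else 0) * c k) k) • u k from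
      specOp_mulVec u _ f]
    rw [Lpow, specOp_mulVec]
    exact Finset.sum_congr rfl fun j _ => by rw [coeff_aux u hu]
  -- translation operator expansion
  have hTr : ∀ s : ℝ, ((Tmat u lam s - 1) ^ r).mulVec f
      = ∑ j, ((Complex.exp (Complex.I * (s : ℂ) * (Real.sqrt (lam j) : ℂ)) - 1) ^ r * c j)
          • u j := by
    intro s
    have hsub : Tmat u lam s - 1
        = specOp u (fun j => Complex.exp (Complex.I * (s : ℂ) * (Real.sqrt (lam j) : ℂ)) - 1) := by
      rw [Tmat, ← specOp_one u hu]
      unfold specOp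
      rw [← Finset.sum_sub_distrib]
      exact Finset.sum_congr rfl fun j _ => (sub_smul _ _ _).symm
    rw [hsub, specOp_pow_mulVec u hu]
  have hF : ∀ s : ℝ, cnorm2 (((Tmat u lam s - 1) ^ r).mulVec f)
      = Real.sqrt (∑ j,
          ‖(Complex.exp (Complex.I * (s : ℂ) * (Real.sqrt (lam j) : ℂ)) - 1) ^ r * c j‖ ^ 2) := by
    intro s
    rw [hTr s, parseval u hu]
  -- boundedness of the sup family
  have hexp_norm : ∀ (s x : ℝ), ‖Complex.exp (Complex.I * (s : ℂ) * (x : ℂ))‖ = 1 := by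
    intro s x
    rw [Complex.norm_exp]
    simp [Complex.mul_re]
  have hbdd : BddAbove (Set.range fun s : {s : ℝ // |s| ≤ t} =>
      cnorm2 (((Tmat u lam s.1 - 1) ^ r).mulVec f)) := by
    refine ⟨Real.sqrt (∑ j, (2 ^ r * ‖c j‖) ^ 2), ?_⟩
    rintro x ⟨s, rfl⟩
    show cnorm2 (((Tmat u lam s.1 - 1) ^ r).mulVec f) ≤ _
    rw [hF]
    apply Real.sqrt_le_sqrt
    apply Finset.sum_le_sum
    intro j _
    have hab : ‖Complex.exp (Complex.I * (s.1 : ℂ) * (Real.sqrt (lam j) : ℂ)) - 1‖ ≤ 2 := by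
      calc ‖Complex.exp (Complex.I * (s.1 : ℂ) * (Real.sqrt (lam j) : ℂ)) - 1‖
          ≤ ‖Complex.exp (Complex.I * (s.1 : ℂ) * (Real.sqrt (lam j) : ℂ))‖ + ‖(1 : ℂ)‖ :=
            norm_sub_le _ _
        _ ≤ 2 := by rw [hexp_norm]; norm_num
    have h1 : ‖(Complex.exp (Complex.I * (s.1 : ℂ) * (Real.sqrt (lam j) : ℂ)) - 1) ^ r * c j‖
        ≤ 2 ^ r * ‖c j‖ := by
      rw [norm_mul, norm_pow]
      exact mul_le_mul_of_nonneg_right (pow_le_pow_left₀ (norm_nonneg _) hab r) (norm_nonneg _)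
    exact pow_le_pow_left₀ (norm_nonneg _) h1 2
  have hle_sup : cnorm2 (((Tmat u lam t - 1) ^ r).mulVec f) ≤ omegaMod u lam r f t :=
    le_ciSup hbdd ⟨t, by rw [abs_of_nonneg ht.le]⟩
  -- key comparison
  have hBnn : (0 : ℝ) ≤ (Real.pi / 2) ^ r := by positivity
  have key : lamN ^ (-(r : ℝ) / 2)
        * cnorm2 ((Lpow u lam ((r : ℝ) / 2)).mulVec ((Pproj u n).mulVec f))
      ≤ (Real.pi / 2) ^ r * cnorm2 (((Tmat u lam t - 1) ^ r).mulVec f) := by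
    rw [hL, parseval u hu, hF t]
    have hAnn : (0 : ℝ) ≤ lamN ^ (-(r : ℝ) / 2) := (Real.rpow_pos_of_pos hlamNpos _).le
    rw [← Real.sqrt_sq hAnn, ← Real.sqrt_mul (sq_nonneg _), ← Real.sqrt_sq hBnn,
      ← Real.sqrt_mul (sq_nonneg _)]
    apply Real.sqrt_le_sqrt
    rw [Finset.mul_sum, Finset.mul_sum]
    apply Finset.sum_le_sum
    intro j _
    have hA2 : (lamN ^ (-(r : ℝ) / 2)) ^ 2 = lamN ^ (-(r : ℝ)) := by
      rw [← Real.rpow_natCast (lamN ^ (-(r : ℝ) / 2)) 2, ← Real.rpow_mul hlamNpos.le]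
      norm_num
    by_cases hj : (j : ℕ) < n
    · simp only [if_pos hj, one_mul]
      have hlj : lam j ≤ lamN := hmono (by simp [Fin.le_def]; omega)
      have hcore := core_ineq (lam j) lamN (hj0 j) hlamNpos hlj r
      have h1 : ‖((lam j ^ ((r : ℝ) / 2) : ℝ) : ℂ) * c j‖ ^ 2
          = lam j ^ ((r : ℝ)) * ‖c j‖ ^ 2 := by
        rw [norm_mul, mul_pow, Complex.norm_real, Real.norm_eq_abs,
          abs_of_nonneg (Real.rpow_nonneg (hj0 j) _)]
        congr 1
        rw [← Real.rpow_natCast (lam j ^ ((r : ℝ) / 2)) 2, ← Real.rpow_mul (hj0 j)]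
        norm_num
      have h2 : ‖(Complex.exp (Complex.I * (t : ℂ) * (Real.sqrt (lam j) : ℂ)) - 1) ^ r * c j‖ ^ 2
          = ‖Complex.exp (Complex.I * (t : ℂ) * (Real.sqrt (lam j) : ℂ)) - 1‖ ^ (2 * r)
            * ‖c j‖ ^ 2 := by
        rw [norm_mul, norm_pow, mul_pow, ← pow_mul, mul_comm r 2]
      have hB2 : ((Real.pi / 2) ^ r) ^ 2 = (Real.pi / 2) ^ (2 * r) := by
        rw [← pow_mul, mul_comm r 2]
      rw [h1, h2, hA2, hB2]
      calc lamN ^ (-(r : ℝ)) * (lam j ^ ((r : ℝ)) * ‖c j‖ ^ 2)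
          = (lamN ^ (-(r : ℝ)) * lam j ^ ((r : ℝ))) * ‖c j‖ ^ 2 := by ring
        _ ≤ ((Real.pi / 2) ^ (2 * r)
              * ‖Complex.exp (Complex.I * (t : ℂ) * (Real.sqrt (lam j) : ℂ)) - 1‖ ^ (2 * r))
            * ‖c j‖ ^ 2 := mul_le_mul_of_nonneg_right hcore (sq_nonneg _)
        _ = (Real.pi / 2) ^ (2 * r)
            * (‖Complex.exp (Complex.I * (t : ℂ) * (Real.sqrt (lam j) : ℂ)) - 1‖ ^ (2 * r)
              * ‖c j‖ ^ 2) := by ring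
    · simp only [if_neg hj, zero_mul, mul_zero, norm_zero]
      have : ((0 : ℝ)) ^ 2 = 0 := by norm_num
      rw [this, mul_zero]
      positivity
  calc lamN ^ (-(r : ℝ) / 2)
        * cnorm2 ((Lpow u lam ((r : ℝ) / 2)).mulVec ((Pproj u n).mulVec f))
      ≤ (Real.pi / 2) ^ r * cnorm2 (((Tmat u lam t - 1) ^ r).mulVec f) := key
    _ ≤ (Real.pi / 2) ^ r * omegaMod u lam r f t :=
        mul_le_mul_of_nonneg_left hle_sup hBnn
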